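/- There is a unique extension of the shuffle product from ℌ≥1 (spans of tuples of positive integers) to a commutative associative product ш* on ℌ≥0 (spans of tuples of nonnegative integers) such that [0] ш* [s⃗] = [0, s⃗] for all tuples s⃗, and such that the shift operator I([s⃗]) = [s⃗ + e⃗₁] (adding 1 to the first entry) is a Rota-Baxter operator of weight 0. -/

import Mathlib

/-- Word-level shuffle product on words over `Bool` (`x₀ = false`, `x₁ = true`). -/
noncomputable def shq : List Bool → List Bool → (List Bool →₀ ℚ)
  | [], l => Finsupp.single l 1
  | a :: as, [] => Finsupp.single (a :: as) 1
  | a :: as, b :: bs =>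
      Finsupp.mapDomain (a :: ·) (shq as (b :: bs))
      + Finsupp.mapDomain (b :: ·) (shq (a :: as) bs)
  termination_by x y => x.length + y.length

/-- `[s₁,…,sₖ] ↦ x₀^{s₁−1}x₁⋯x₀^{sₖ−1}x₁`, the correspondence between tuples of
positive integers and words ending in `x₁`. -/
def wordOf' (s : List ℕ) : List Bool :=
  (s.map fun n => List.replicate (n - 1) false ++ [true]).flatten

/-- Inverse correspondence: a word ending in `x₁` gives a tuple of positive
integers. -/
def toTuple : List Bool → List ℕ
  | [] => []
  | false :: w =>
      match toTuple w with
      | [] => []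
      | s :: t => (s + 1) :: t
  | true :: w => 1 :: toTuple w

/-- `I` adds 1 to the first entry of a tuple. -/
def incFirst : List ℕ → List ℕ
  | [] => []
  | a :: t => (a + 1) :: t

/-- Basis vector of `ℌ≥0` corresponding to a tuple. -/
noncomputable def E (s : List ℕ) : List ℕ →₀ ℚ := Finsupp.single s 1

/-- `GoodMul mul` says that the bilinear product `mul` on `ℌ≥0` (the span of the
nonempty tuples of nonnegative integers) is a commutative associative extension of
the shuffle product of `ℌ≥1` (transported from the word shuffle) satisfying
`[0] ш* [s⃗] = [0,s⃗]`, for which the shift `I` is a Rota-Baxter operator of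
weight 0. -/
def GoodMul (mul : (List ℕ →₀ ℚ) →ₗ[ℚ] (List ℕ →₀ ℚ) →ₗ[ℚ] (List ℕ →₀ ℚ)) : Prop :=
  (∀ s t : List ℕ, s ≠ [] → t ≠ [] → (∀ x ∈ s, 1 ≤ x) → (∀ x ∈ t, 1 ≤ x) →
      mul (E s) (E t) = Finsupp.mapDomain toTuple (shq (wordOf' s) (wordOf' t))) ∧
  (∀ s t : List ℕ, s ≠ [] → t ≠ [] → mul (E s) (E t) = mul (E t) (E s)) ∧
  (∀ s t u : List ℕ, s ≠ [] → t ≠ [] → u ≠ [] →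
      mul (mul (E s) (E t)) (E u) = mul (E s) (mul (E t) (E u))) ∧
  (∀ s : List ℕ, s ≠ [] → mul (E [0]) (E s) = E (0 :: s)) ∧
  (∀ s t : List ℕ, s ≠ [] → t ≠ [] →
      mul (Finsupp.mapDomain incFirst (E s)) (Finsupp.mapDomain incFirst (E t)) =
        Finsupp.mapDomain incFirst (mul (E s) (Finsupp.mapDomain incFirst (E t))) +
        Finsupp.mapDomain incFirst (mul (Finsupp.mapDomain incFirst (E s)) (E t)))

/-! ### The extended shuffle product on tuples -/

noncomputable def shm : List ℕ → List ℕ → (List ℕ →₀ ℚ)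
  | [], l => E l
  | a :: as, [] => E (a :: as)
  | 0 :: as, b :: bs => Finsupp.mapDomain (0 :: ·) (shm as (b :: bs))
  | (a+1) :: as, 0 :: bs => Finsupp.mapDomain (0 :: ·) (shm ((a+1) :: as) bs)
  | (a+1) :: as, (b+1) :: bs =>
      Finsupp.mapDomain incFirst (shm (a :: as) ((b+1) :: bs))
      + Finsupp.mapDomain incFirst (shm ((a+1) :: as) (b :: bs))
  termination_by s t => (s.length + t.length, s.headI + t.headI)

lemma shm_nil (l : List ℕ) : shm [] l = E l := by rw [shm]
lemma shm_nil' (a : ℕ) (as : List ℕ) : shm (a::as) [] = E (a::as) := by rw [shm]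
lemma shm_zl (as : List ℕ) (b : ℕ) (bs : List ℕ) :
    shm (0::as) (b::bs) = Finsupp.mapDomain (0 :: ·) (shm as (b::bs)) := by rw [shm]
lemma shm_zr (a : ℕ) (as bs : List ℕ) :
    shm ((a+1)::as) (0::bs) = Finsupp.mapDomain (0 :: ·) (shm ((a+1)::as) bs) := by rw [shm]
lemma shm_pos (a : ℕ) (as : List ℕ) (b : ℕ) (bs : List ℕ) :
    shm ((a+1)::as) ((b+1)::bs) =
      Finsupp.mapDomain incFirst (shm (a :: as) ((b+1) :: bs))
      + Finsupp.mapDomain incFirst (shm ((a+1) :: as) (b :: bs)) := by rw [shm]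
lemma mapDomain_E (f : List ℕ → List ℕ) (s : List ℕ) :
    Finsupp.mapDomain f (E s) = E (f s) := Finsupp.mapDomain_single
lemma shm_nilr (s : List ℕ) : shm s [] = E s := by
  cases s with
  | nil => exact shm_nil []
  | cons a as => exact shm_nil' a as
lemma lzero (s w : List ℕ) : shm (0::s) w = Finsupp.mapDomain (0 :: ·) (shm s w) := by
  cases w with
  | nil => rw [shm_nilr, shm_nilr, mapDomain_E]
  | cons b bs => exact shm_zl s b bs
lemma rzero (s w : List ℕ) : shm s (0::w) = Finsupp.mapDomain (0 :: ·) (shm s w) := by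
  induction s with
  | nil => rw [shm_nil, shm_nil, mapDomain_E]
  | cons a s ih =>
    cases a with
    | zero => rw [shm_zl, lzero, ih]
    | succ a => rw [shm_zr]
lemma shm_comm (s t : List ℕ) : shm s t = shm t s := by
  induction s, t using shm.induct with
  | case1 l => rw [shm_nil, shm_nilr]
  | case2 a as => rw [shm_nil, shm_nilr]
  | case3 as b bs ih => rw [shm_zl, rzero, ih]
  | case4 a as bs ih => rw [shm_zr, lzero, ih]
  | case5 a as b bs ih1 ih2 => rw [shm_pos, shm_pos, ih1, ih2, add_comm]
lemma incFirst_length (l : List ℕ) : (incFirst l).length = l.length := by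
  cases l <;> simp [incFirst]
lemma shm_support_length (s t : List ℕ) :
    ∀ v ∈ (shm s t).support, v.length = s.length + t.length := by
  induction s, t using shm.induct with
  | case1 l =>
    intro v hv
    rw [shm_nil] at hv
    simp only [E, Finsupp.support_single_ne_zero _ one_ne_zero, Finset.mem_singleton] at hv
    simp [hv]
  | case2 a as =>
    intro v hv
    rw [shm_nil'] at hv
    simp only [E, Finsupp.support_single_ne_zero _ one_ne_zero, Finset.mem_singleton] at hv
    simp [hv]
  | case3 as b bs ih =>
    intro v hv
    rw [shm_zl] at hv
    obtain ⟨w, hw, rfl⟩ := Finset.mem_image.mp (Finsupp.mapDomain_support hv)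
    simp [ih w hw]; omega
  | case4 a as bs ih =>
    intro v hv
    rw [shm_zr] at hv
    obtain ⟨w, hw, rfl⟩ := Finset.mem_image.mp (Finsupp.mapDomain_support hv)
    simp [ih w hw]; omega
  | case5 a as b bs ih1 ih2 =>
    intro v hv
    rw [shm_pos] at hv
    rcases Finset.mem_union.mp (Finsupp.support_add hv) with h | h <;>
      obtain ⟨w, hw, rfl⟩ := Finset.mem_image.mp (Finsupp.mapDomain_support h)
    · rw [incFirst_length, ih1 w hw]; simp
    · rw [incFirst_length, ih2 w hw]; simp
lemma shm_support_ne_nil {s t : List ℕ} (hs : s ≠ []) (ht : t ≠ []) :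
    ∀ v ∈ (shm s t).support, v ≠ [] := by
  intro v hv h
  have hl := shm_support_length s t v hv
  rw [h] at hl
  cases s with
  | nil => exact hs rfl
  | cons a as =>
    cases t with
    | nil => exact ht rfl
    | cons b bs => simp at hl

/-! ### The bilinear extension -/

noncomputable def mulSh : (List ℕ →₀ ℚ) →ₗ[ℚ] (List ℕ →₀ ℚ) →ₗ[ℚ] (List ℕ →₀ ℚ) :=
  Finsupp.lsum ℚ fun s => LinearMap.toSpanSingleton ℚ _
    (Finsupp.lsum ℚ fun t => LinearMap.toSpanSingleton ℚ _ (shm s t))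

lemma mul_EE (s t : List ℕ) : mulSh (E s) (E t) = shm s t := by
  simp [mulSh, E, LinearMap.toSpanSingleton_apply]
lemma single_eq_smul_E (v : List ℕ) (c : ℚ) : Finsupp.single v c = c • E v := by
  simp [E, Finsupp.smul_single]
lemma mul_left_apply (X : List ℕ →₀ ℚ) (u : List ℕ) :
    mulSh X (E u) = X.sum fun v c => c • shm v u := by
  induction X using Finsupp.induction_linear with
  | zero => simp
  | add f g hf hg =>
      rw [map_add, LinearMap.add_apply, hf, hg,
        Finsupp.sum_add_index' (by intro; simp) (by intros; rw [add_smul])]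
  | single v c =>
      rw [Finsupp.sum_single_index (by simp), single_eq_smul_E, map_smul,
        LinearMap.smul_apply, mul_EE]
lemma mul_right_apply (s : List ℕ) (Y : List ℕ →₀ ℚ) :
    mulSh (E s) Y = Y.sum fun w c => c • shm s w := by
  induction Y using Finsupp.induction_linear with
  | zero => simp
  | add f g hf hg =>
      rw [map_add, hf, hg,
        Finsupp.sum_add_index' (by intro; simp) (by intros; rw [add_smul])]
  | single v c =>
      rw [Finsupp.sum_single_index (by simp), single_eq_smul_E, map_smul, mul_EE]

lemma sum_mapDomain (f : List ℕ → List ℕ) (X : List ℕ →₀ ℚ) (g : List ℕ → List ℕ →₀ ℚ) :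
    (Finsupp.mapDomain f X).sum (fun v c => c • g v) = X.sum (fun v c => c • g (f v)) :=
  Finsupp.sum_mapDomain_index (by simp) (by intros; rw [add_smul])
lemma mapDomain_sum (f : List ℕ → List ℕ) (X : List ℕ →₀ ℚ) (g : List ℕ → List ℕ →₀ ℚ) :
    Finsupp.mapDomain f (X.sum fun v c => c • g v)
      = X.sum fun v c => c • Finsupp.mapDomain f (g v) := by
  rw [← Finsupp.lmapDomain_apply ℚ ℚ f, map_finsuppSum]
  simp [Finsupp.lmapDomain_apply]
lemma sum_E (X : List ℕ →₀ ℚ) : (X.sum fun v c => c • E v) = X := by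
  conv_rhs => rw [← Finsupp.sum_single X]
  exact Finsupp.sum_congr fun v _ => (single_eq_smul_E v (X v)).symm

lemma M0L (X : List ℕ →₀ ℚ) (u : List ℕ) :
    mulSh (Finsupp.mapDomain (0 :: ·) X) (E u)
      = Finsupp.mapDomain (0 :: ·) (mulSh X (E u)) := by
  rw [mul_left_apply, sum_mapDomain, mul_left_apply, mapDomain_sum]
  exact Finsupp.sum_congr fun v _ => by rw [lzero]
lemma M0R (X : List ℕ →₀ ℚ) (u : List ℕ) :
    mulSh X (E (0 :: u)) = Finsupp.mapDomain (0 :: ·) (mulSh X (E u)) := by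
  rw [mul_left_apply, mul_left_apply, mapDomain_sum]
  exact Finsupp.sum_congr fun v _ => by rw [rzero]
lemma M0R' (s : List ℕ) (Y : List ℕ →₀ ℚ) :
    mulSh (E (0 :: s)) Y = Finsupp.mapDomain (0 :: ·) (mulSh (E s) Y) := by
  rw [mul_right_apply, mul_right_apply, mapDomain_sum]
  exact Finsupp.sum_congr fun w _ => by rw [lzero]
lemma M0R'' (s : List ℕ) (Y : List ℕ →₀ ℚ) :
    mulSh (E s) (Finsupp.mapDomain (0 :: ·) Y)
      = Finsupp.mapDomain (0 :: ·) (mulSh (E s) Y) := by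
  rw [mul_right_apply, sum_mapDomain, mul_right_apply, mapDomain_sum]
  exact Finsupp.sum_congr fun w _ => by rw [rzero]
lemma mul_unit_left (Y : List ℕ →₀ ℚ) : mulSh (E []) Y = Y := by
  rw [mul_right_apply]
  rw [Finsupp.sum_congr (g2 := fun w c => c • E w) fun w _ => by rw [shm_nil]]
  exact sum_E Y
lemma mul_unit_right (X : List ℕ →₀ ℚ) : mulSh X (E []) = X := by
  rw [mul_left_apply]
  rw [Finsupp.sum_congr (g2 := fun w c => c • E w) fun w _ => by rw [shm_nilr]]
  exact sum_E X

lemma B5 (v : List ℕ) (hv : v ≠ []) (c : ℕ) (u' : List ℕ) :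
    shm (incFirst v) ((c+1)::u') =
      Finsupp.mapDomain incFirst (shm v ((c+1)::u'))
      + Finsupp.mapDomain incFirst (shm (incFirst v) (c::u')) := by
  obtain ⟨d, v', rfl⟩ := List.exists_cons_of_ne_nil hv
  exact shm_pos d v' c u'
lemma B5' (w : List ℕ) (hw : w ≠ []) (a : ℕ) (s' : List ℕ) :
    shm ((a+1)::s') (incFirst w) =
      Finsupp.mapDomain incFirst (shm (a::s') (incFirst w))
      + Finsupp.mapDomain incFirst (shm ((a+1)::s') w) := by
  obtain ⟨e, w', rfl⟩ := List.exists_cons_of_ne_nil hw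
  exact shm_pos a s' e w'

lemma MIL (X : List ℕ →₀ ℚ) (hX : ∀ v ∈ X.support, v ≠ []) (c : ℕ) (u' : List ℕ) :
    mulSh (Finsupp.mapDomain incFirst X) (E ((c+1)::u')) =
      Finsupp.mapDomain incFirst (mulSh X (E ((c+1)::u'))) +
      Finsupp.mapDomain incFirst (mulSh (Finsupp.mapDomain incFirst X) (E (c::u'))) := by
  rw [mul_left_apply, sum_mapDomain]
  rw [Finsupp.sum_congr
    (g2 := fun v k => k • (Finsupp.mapDomain incFirst (shm v ((c+1)::u'))
      + Finsupp.mapDomain incFirst (shm (incFirst v) (c::u'))))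
    (fun v hv => by rw [B5 v (hX v hv)])]
  simp only [smul_add]
  rw [Finsupp.sum_add]
  congr 1
  · rw [mul_left_apply, mapDomain_sum]
  · rw [mul_left_apply, sum_mapDomain, mapDomain_sum]
lemma MIR (a : ℕ) (s' : List ℕ) (Y : List ℕ →₀ ℚ) (hY : ∀ w ∈ Y.support, w ≠ []) :
    mulSh (E ((a+1)::s')) (Finsupp.mapDomain incFirst Y) =
      Finsupp.mapDomain incFirst (mulSh (E (a::s')) (Finsupp.mapDomain incFirst Y)) +
      Finsupp.mapDomain incFirst (mulSh (E ((a+1)::s')) Y) := by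
  rw [mul_right_apply, sum_mapDomain]
  rw [Finsupp.sum_congr
    (g2 := fun w k => k • (Finsupp.mapDomain incFirst (shm (a::s') (incFirst w))
      + Finsupp.mapDomain incFirst (shm ((a+1)::s') w)))
    (fun w hw => by rw [B5' w (hY w hw)])]
  simp only [smul_add]
  rw [Finsupp.sum_add]
  congr 1
  · rw [mul_right_apply, sum_mapDomain, mapDomain_sum]
  · rw [mul_right_apply, mapDomain_sum]

def N (l : List ℕ) : ℕ := l.length + l.sum

theorem shm_assoc (s t u : List ℕ) :
    mulSh (shm s t) (E u) = mulSh (E s) (shm t u) := by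
  match s, t, u with
  | [], t, u => rw [shm_nil, mul_unit_left, mul_EE]
  | a::as, [], u => rw [shm_nilr, shm_nil]
  | a::as, b::bs, [] => rw [shm_nilr, mul_unit_right, mul_EE]
  | 0::s', b::bs, c::cs =>
    rw [lzero, M0L, shm_assoc s' (b::bs) (c::cs), ← M0R']
  | (a+1)::s', 0::t', c::cs =>
    rw [rzero, M0L, shm_assoc ((a+1)::s') t' (c::cs), ← M0R'', ← lzero]
  | (a+1)::s', (b+1)::t', 0::u' =>
    rw [M0R, shm_assoc ((a+1)::s') ((b+1)::t') u', ← M0R'', ← rzero]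
  | (a+1)::s', (b+1)::t', (c+1)::u' =>
    have hA : ∀ v ∈ (shm (a::s') ((b+1)::t')).support, v ≠ [] :=
      shm_support_ne_nil (by simp) (by simp)
    have hB : ∀ v ∈ (shm ((a+1)::s') (b::t')).support, v ≠ [] :=
      shm_support_ne_nil (by simp) (by simp)
    have hC : ∀ w ∈ (shm (b::t') ((c+1)::u')).support, w ≠ [] :=
      shm_support_ne_nil (by simp) (by simp)
    have hD : ∀ w ∈ (shm ((b+1)::t') (c::u')).support, w ≠ [] :=
      shm_support_ne_nil (by simp) (by simp)
    have e1 := shm_assoc (a::s') ((b+1)::t') ((c+1)::u')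
    have e2 := shm_assoc ((a+1)::s') (b::t') ((c+1)::u')
    have e3 := shm_assoc ((a+1)::s') ((b+1)::t') (c::u')
    have key : mulSh (Finsupp.mapDomain incFirst (shm (a::s') ((b+1)::t'))) (E (c::u'))
           + mulSh (Finsupp.mapDomain incFirst (shm ((a+1)::s') (b::t'))) (E (c::u'))
           = mulSh (E ((a+1)::s')) (shm ((b+1)::t') (c::u')) := by
      rw [← LinearMap.add_apply, ← map_add, ← shm_pos, e3]
    have key2 : mulSh (E (a::s')) (Finsupp.mapDomain incFirst (shm (b::t') ((c+1)::u')))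
            + mulSh (E (a::s')) (Finsupp.mapDomain incFirst (shm ((b+1)::t') (c::u')))
            = mulSh (E (a::s')) (shm ((b+1)::t') ((c+1)::u')) := by
      rw [← map_add, ← shm_pos]
    conv_lhs => rw [shm_pos a s' b t', map_add, LinearMap.add_apply,
      MIL _ hA c u', MIL _ hB c u']
    conv_rhs => rw [shm_pos b t' c u', map_add, MIR a s' _ hC, MIR a s' _ hD]
    rw [e1, e2, ← key, ← key2, Finsupp.mapDomain_add, Finsupp.mapDomain_add]
    abel
  termination_by N s + N t + N u
  decreasing_by all_goals (first | (simp [N]; omega) | simp [N])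

/-! ### Agreement with the word shuffle on positive tuples -/

lemma shq_nil (l : List Bool) : shq [] l = Finsupp.single l 1 := by rw [shq]
lemma shq_nil' (a : Bool) (as : List Bool) : shq (a::as) [] = Finsupp.single (a::as) 1 := by
  rw [shq]
lemma shq_cons (a : Bool) (as : List Bool) (b : Bool) (bs : List Bool) :
    shq (a::as) (b::bs) = Finsupp.mapDomain (a :: ·) (shq as (b :: bs))
      + Finsupp.mapDomain (b :: ·) (shq (a :: as) bs) := by rw [shq]

lemma toTuple_false (w : List Bool) : toTuple (false :: w) = incFirst (toTuple w) := by
  cases h : toTuple w <;> simp [toTuple, incFirst, h]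
lemma toTuple_true (w : List Bool) : toTuple (true :: w) = 1 :: toTuple w := rfl

def ValidW (w : List Bool) : Prop := w = [] ∨ w.getLast? = some true

lemma validW_tail' {b : Bool} {w : List Bool} (h : ValidW (b :: w)) : ValidW w := by
  cases w with
  | nil => exact Or.inl rfl
  | cons c v =>
    rcases h with h | h
    · simp at h
    · right; rwa [List.getLast?_cons_cons] at h
lemma validW_false {w : List Bool} (h : ValidW (false :: w)) : w ≠ [] := by
  rintro rfl
  rcases h with h | h <;> simp at h
lemma toTuple_ne_nil : ∀ (w : List Bool), w ≠ [] → ValidW w → toTuple w ≠ [] := by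
  intro w
  induction w with
  | nil => intro h; exact absurd rfl h
  | cons b v ih =>
    intro _ hv
    cases b with
    | true => simp [toTuple_true]
    | false =>
      have hv' : v ≠ [] := validW_false hv
      have h2 := ih hv' (validW_tail' hv)
      rw [toTuple_false]
      obtain ⟨x, r, hx⟩ := List.exists_cons_of_ne_nil h2
      rw [hx]; simp [incFirst]
lemma validW_wordOf' (s : List ℕ) : ValidW (wordOf' s) := by
  induction s with
  | nil => left; rfl
  | cons a s ih =>
    right
    have hw : wordOf' (a :: s) = (List.replicate (a-1) false ++ [true]) ++ wordOf' s := by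
      simp [wordOf']
    rw [hw]
    rcases ih with h | h
    · rw [h, List.append_nil, List.getLast?_concat]
    · have hne : wordOf' s ≠ [] := by
        intro hw2; rw [hw2] at h; simp at h
      rw [List.getLast?_append_of_ne_nil _ hne, h]
lemma toTuple_replicate (n : ℕ) (w : List Bool) :
    toTuple (List.replicate n false ++ true :: w) = (n+1) :: toTuple w := by
  induction n with
  | zero => simp [toTuple_true]
  | succ n ih => simp only [List.replicate_succ, List.cons_append, toTuple_false, ih, incFirst]
lemma toTuple_wordOf' (s : List ℕ) (hs : ∀ x ∈ s, 1 ≤ x) : toTuple (wordOf' s) = s := by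
  induction s with
  | nil => rfl
  | cons a s ih =>
    have ha : 1 ≤ a := hs a (by simp)
    have hw : wordOf' (a :: s) = List.replicate (a-1) false ++ true :: wordOf' s := by
      simp [wordOf']
    rw [hw, toTuple_replicate, ih (fun x hx => hs x (by simp [hx]))]
    congr 1; omega

lemma mapD_false (X : List Bool →₀ ℚ) :
    Finsupp.mapDomain toTuple (Finsupp.mapDomain (false :: ·) X)
      = Finsupp.mapDomain incFirst (Finsupp.mapDomain toTuple X) := by
  rw [← Finsupp.mapDomain_comp, ← Finsupp.mapDomain_comp]
  exact congrArg (fun f => Finsupp.mapDomain f X) (funext fun w => toTuple_false w)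
lemma mapD_true (X : List Bool →₀ ℚ) :
    Finsupp.mapDomain toTuple (Finsupp.mapDomain (true :: ·) X)
      = Finsupp.mapDomain ((1:ℕ) :: ·) (Finsupp.mapDomain toTuple X) := by
  rw [← Finsupp.mapDomain_comp, ← Finsupp.mapDomain_comp]
  congr 1
lemma mapD_inc0 (X : List ℕ →₀ ℚ) :
    Finsupp.mapDomain incFirst (Finsupp.mapDomain ((0:ℕ) :: ·) X)
      = Finsupp.mapDomain ((1:ℕ) :: ·) X := by
  rw [← Finsupp.mapDomain_comp]
  congr 1

theorem wq (w₁ w₂ : List Bool) (h₁ : ValidW w₁) (h₂ : ValidW w₂) :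
    Finsupp.mapDomain toTuple (shq w₁ w₂) = shm (toTuple w₁) (toTuple w₂) := by
  match w₁, w₂ with
  | [], w₂ =>
    rw [shq_nil, Finsupp.mapDomain_single]
    show _ = shm [] (toTuple w₂)
    rw [shm_nil]; rfl
  | a::as, [] =>
    rw [shq_nil', Finsupp.mapDomain_single]
    show _ = shm (toTuple (a::as)) []
    rw [shm_nilr]; rfl
  | b₁::v₁, b₂::v₂ =>
    have hv₁ : ValidW v₁ := validW_tail' h₁
    have hv₂ : ValidW v₂ := validW_tail' h₂
    have ih1 := wq v₁ (b₂::v₂) hv₁ h₂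
    have ih2 := wq (b₁::v₁) v₂ h₁ hv₂
    rw [shq_cons, Finsupp.mapDomain_add]
    cases b₁ with
    | true =>
      cases b₂ with
      | true =>
        rw [mapD_true, mapD_true, ih1, ih2]
        simp only [toTuple_true]
        have hp := shm_pos 0 (toTuple v₁) 0 (toTuple v₂)
        simp only [Nat.zero_add] at hp
        rw [hp, lzero, rzero, mapD_inc0, mapD_inc0]
      | false =>
        obtain ⟨e, r₂, he⟩ := List.exists_cons_of_ne_nil
          (toTuple_ne_nil v₂ (validW_false h₂) hv₂)
        rw [mapD_true, mapD_false, ih1, ih2, toTuple_false, he]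
        simp only [toTuple_true, incFirst]
        have hp := shm_pos 0 (toTuple v₁) e r₂
        simp only [Nat.zero_add] at hp
        rw [hp, lzero, mapD_inc0]
    | false =>
      obtain ⟨d, r₁, hd⟩ := List.exists_cons_of_ne_nil
        (toTuple_ne_nil v₁ (validW_false h₁) hv₁)
      cases b₂ with
      | true =>
        rw [mapD_false, mapD_true, ih1, ih2, toTuple_false, hd]
        simp only [toTuple_true, incFirst]
        have hp := shm_pos d r₁ 0 (toTuple v₂)
        simp only [Nat.zero_add] at hp
        rw [hp, rzero, mapD_inc0]
      | false =>
        obtain ⟨e, r₂, he⟩ := List.exists_cons_of_ne_nil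
          (toTuple_ne_nil v₂ (validW_false h₂) hv₂)
        rw [mapD_false, mapD_false, ih1, ih2, toTuple_false, toTuple_false, hd, he]
        simp only [incFirst]
        exact (shm_pos d r₁ e r₂).symm
  termination_by w₁.length + w₂.length
  decreasing_by all_goals (first | (simp; omega) | simp)

/-! ### Uniqueness -/

lemma lin_sum (f : (List ℕ →₀ ℚ) →ₗ[ℚ] (List ℕ →₀ ℚ)) (X : List ℕ →₀ ℚ) :
    f X = X.sum fun v c => c • f (E v) := by
  induction X using Finsupp.induction_linear with
  | zero => simp
  | add p q hp hq =>
      rw [map_add, hp, hq,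
        Finsupp.sum_add_index' (by intro; simp) (by intros; rw [add_smul])]
  | single v c =>
      rw [Finsupp.sum_single_index (by simp), single_eq_smul_E, map_smul]
lemma mapDomain_eq_sum_E (f : List ℕ → List ℕ) (X : List ℕ →₀ ℚ) :
    Finsupp.mapDomain f X = X.sum fun v c => c • E (f v) := by
  rw [Finsupp.mapDomain]
  exact Finsupp.sum_congr fun v _ => single_eq_smul_E _ _

theorem uniq (m : (List ℕ →₀ ℚ) →ₗ[ℚ] (List ℕ →₀ ℚ) →ₗ[ℚ] (List ℕ →₀ ℚ))
    (h : GoodMul m) (s t : List ℕ) (hs : s ≠ []) (ht : t ≠ []) :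
    m (E s) (E t) = shm s t := by
  match s, t with
  | 0 :: s', t =>
    cases s' with
    | nil => rw [h.2.2.2.1 t ht, lzero, shm_nil, mapDomain_E]
    | cons x s'' =>
      have hs' : (x::s'') ≠ [] := by simp
      rw [show E (0::x::s'') = m (E [0]) (E (x::s'')) from (h.2.2.2.1 _ hs').symm,
        h.2.2.1 [0] (x::s'') t (by simp) hs' ht,
        uniq m h (x::s'') t hs' ht,
        lin_sum (m (E [0]))]
      rw [Finsupp.sum_congr (g2 := fun v c => c • E (0::v))
        (fun v hv => by rw [h.2.2.2.1 v (shm_support_ne_nil hs' ht v hv)])]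
      rw [← mapDomain_eq_sum_E, ← lzero]
  | (a+1) :: s', 0 :: t' =>
    cases t' with
    | nil =>
      rw [h.2.1 _ _ hs (by simp), h.2.2.2.1 _ hs, shm_zr, shm_nilr, mapDomain_E]
    | cons y t'' =>
      have ht' : (y::t'') ≠ [] := by simp
      rw [show E (0::y::t'') = m (E [0]) (E (y::t'')) from (h.2.2.2.1 _ ht').symm,
        ← h.2.2.1 ((a+1)::s') [0] (y::t'') hs (by simp) ht',
        h.2.1 ((a+1)::s') [0] hs (by simp),
        h.2.2.1 [0] ((a+1)::s') (y::t'') (by simp) hs ht',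
        uniq m h ((a+1)::s') (y::t'') hs ht',
        lin_sum (m (E [0]))]
      rw [Finsupp.sum_congr (g2 := fun v c => c • E (0::v))
        (fun v hv => by rw [h.2.2.2.1 v (shm_support_ne_nil hs ht' v hv)])]
      rw [← mapDomain_eq_sum_E, ← rzero]
  | (a+1) :: s', (b+1) :: t' =>
    have h5 := h.2.2.2.2 (a::s') (b::t') (by simp) (by simp)
    rw [mapDomain_E, mapDomain_E] at h5
    simp only [incFirst] at h5
    rw [h5, uniq m h (a::s') ((b+1)::t') (by simp) (by simp),
      uniq m h ((a+1)::s') (b::t') (by simp) (by simp), ← shm_pos]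
  termination_by N s + N t
  decreasing_by all_goals (subst_vars; first | (simp [N]; omega) | simp [N])

/-- The shuffle product of `ℌ≥1` extends uniquely to a commutative associative
product `ш*` on `ℌ≥0` with `[0] ш* [s⃗] = [0,s⃗]` and such that the shift operator
`I([s⃗]) = [s⃗+e⃗₁]` is a Rota-Baxter operator of weight 0. -/
theorem shuffle_extension_exists_unique :
    (∃ mul : (List ℕ →₀ ℚ) →ₗ[ℚ] (List ℕ →₀ ℚ) →ₗ[ℚ] (List ℕ →₀ ℚ), GoodMul mul) ∧
    (∀ mul mul' : (List ℕ →₀ ℚ) →ₗ[ℚ] (List ℕ →₀ ℚ) →ₗ[ℚ] (List ℕ →₀ ℚ),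
      GoodMul mul → GoodMul mul' →
      ∀ s t : List ℕ, s ≠ [] → t ≠ [] → mul (E s) (E t) = mul' (E s) (E t)) := by
  constructor
  · refine ⟨mulSh, ?_, ?_, ?_, ?_, ?_⟩
    · intro s t hs ht hps hpt
      rw [mul_EE, wq (wordOf' s) (wordOf' t) (validW_wordOf' s) (validW_wordOf' t),
        toTuple_wordOf' s hps, toTuple_wordOf' t hpt]
    · intro s t _ _; rw [mul_EE, mul_EE, shm_comm]
    · intro s t u _ _ _
      rw [mul_EE, mul_EE]
      exact shm_assoc s t u
    · intro s _; rw [mul_EE, lzero, shm_nil, mapDomain_E]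
    · intro s t hs ht
      obtain ⟨a, s', rfl⟩ := List.exists_cons_of_ne_nil hs
      obtain ⟨b, t', rfl⟩ := List.exists_cons_of_ne_nil ht
      rw [mapDomain_E, mapDomain_E]
      simp only [incFirst]
      rw [mul_EE, mul_EE, mul_EE, shm_pos]
  · intro m m' hm hm' s t hs ht
    rw [uniq m hm s t hs ht, uniq m' hm' s t hs ht]
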